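/- In dimension 1, under Hypotheses 1–3: let u = T⁻[v] with v 1-periodic semiconcave, and Σ₊[u] the (single-valued, continuous, non-decreasing, degree-one) optimal forward map. For every y ∈ ℝ, the preimage (Σ₊[u])⁻¹(y) is either a singleton or a non-degenerate compact interval; if it is a singleton {x}, then x minimizes v(·) + S(·,y); if it is [x₋, x₊] with x₋ < x₊, then both x₋ and x₊ minimize v(·) + S(·,y). -/

import Mathlib

open Filter Topology

/-- The discrete backward Lax-Oleinik operator (dimension 1). -/
noncomputable def Tminus (S : ℝ → ℝ → ℝ) (u : ℝ → ℝ) : ℝ → ℝ :=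
  fun y => ⨅ x, (u x + S x y)

/-- The discrete forward Lax-Oleinik operator (dimension 1). -/
noncomputable def Tplus (S : ℝ → ℝ → ℝ) (u : ℝ → ℝ) : ℝ → ℝ :=
  fun x => ⨆ y, (u y - S x y)

/-- 1-periodicity. -/
def Periodic1 (u : ℝ → ℝ) : Prop := ∀ x, u (x + 1) = u x

/-- Coercivity: S(x,y) → +∞ as |x−y| → ∞. -/
def Coercive1 (S : ℝ → ℝ → ℝ) : Prop :=
  ∀ M : ℝ, ∃ R : ℝ, ∀ x y : ℝ, R ≤ |x - y| → M ≤ S x y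

/-- Diagonal periodicity: S(x+m, y+m) = S(x,y) for m ∈ ℤ. -/
def DiagPeriodic1 (S : ℝ → ℝ → ℝ) : Prop :=
  ∀ (m : ℤ) (x y : ℝ), S (x + m) (y + m) = S x y

/-- Semiconcavity with a linear modulus (dimension 1). -/
def Semiconcave1 (v : ℝ → ℝ) : Prop :=
  ∃ C : ℝ, 0 ≤ C ∧ ∀ x y θ : ℝ, θ ∈ Set.Icc (0:ℝ) 1 →
    θ * v x + (1 - θ) * v y - v (θ * x + (1 - θ) * y) ≤
      C / 2 * θ * (1 - θ) * |x - y| ^ 2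

/-- Local semiconcavity (with linear modulus) on a normed space. -/
def LocallySemiconcave {E : Type*} [NormedAddCommGroup E] [NormedSpace ℝ E]
    (f : E → ℝ) : Prop :=
  ∀ x : E, ∃ U ∈ 𝓝 x, Convex ℝ U ∧ ∃ C : ℝ, 0 ≤ C ∧
    ∀ y ∈ U, ∀ z ∈ U, ∀ θ : ℝ, θ ∈ Set.Icc (0:ℝ) 1 →
      θ * f y + (1 - θ) * f z - f (θ • y + (1 - θ) • z) ≤
        C / 2 * θ * (1 - θ) * ‖y - z‖ ^ 2

/-- The ferromagnetic property in dimension 1: S is C¹ and the maps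
`y ↦ ∂₁S(x,y)` and `x ↦ ∂₂S(x,y)` are homeomorphisms of ℝ. -/
def Ferromagnetic1 (S : ℝ → ℝ → ℝ) : Prop :=
  ContDiff ℝ 1 (fun p : ℝ × ℝ => S p.1 p.2) ∧
  (∀ x : ℝ, ∃ h : ℝ ≃ₜ ℝ, ∀ y, h y = deriv (fun t => S t y) x) ∧
  (∀ y : ℝ, ∃ h : ℝ ≃ₜ ℝ, ∀ x, h x = deriv (fun t => S x t) y)

/-- The Aubry–Le Daeron non-crossing condition. -/
def NonCrossing (S : ℝ → ℝ → ℝ) : Prop :=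
  ∀ x₁ x₂ y₁ y₂ : ℝ, (x₁ - x₂) * (y₁ - y₂) < 0 →
    S x₁ y₂ + S x₂ y₁ < S x₁ y₁ + S x₂ y₂

section Aux

private lemma shift_int_aux (g : ℝ → ℝ) (c : ℝ) (h : ∀ x, g (x + 1) = g x + c) :
    ∀ (x : ℝ) (n : ℤ), g (x + n) = g x + n * c := by
  intro x n
  induction n using Int.induction_on with
  | zero => simp
  | succ k ih =>
    have e : x + ((k : ℤ) + 1 : ℤ) = (x + (k : ℤ)) + 1 := by push_cast; ring
    rw [e, h, ih]; push_cast; ring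
  | pred k ih =>
    have e : x + (-(k : ℤ) - 1 : ℤ) + 1 = x + (-(k : ℤ) : ℤ) := by push_cast; ring
    have := h (x + (-(k : ℤ) - 1 : ℤ))
    rw [e, ih] at this
    have := this
    push_cast at this ⊢
    linarith

private lemma semiconcave1_continuous {v : ℝ → ℝ} (hv : Semiconcave1 v) : Continuous v := by
  obtain ⟨C, hC, hineq⟩ := hv
  have hconc : ConcaveOn ℝ Set.univ (fun x => v x - C / 2 * x ^ 2) := by
    refine ⟨convex_univ, ?_⟩
    intro x _ y _ a b ha hb hab
    have h1 := hineq x y a ⟨ha, by linarith⟩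
    have hb' : b = 1 - a := by linarith
    simp only [smul_eq_mul]
    have habs : |x - y| ^ 2 = (x - y) ^ 2 := by rw [sq_abs]
    rw [hb']
    rw [habs] at h1
    nlinarith [sq_nonneg (x - y)]
  have hcont : ContinuousOn (fun x => v x - C / 2 * x ^ 2) Set.univ :=
    hconc.continuousOn isOpen_univ
  have : Continuous (fun x => v x - C / 2 * x ^ 2) := continuousOn_univ.mp hcont
  have : Continuous (fun x => (v x - C / 2 * x ^ 2) + C / 2 * x ^ 2) :=
    this.add (by continuity)
  simpa using this

private lemma periodic1_bound {v : ℝ → ℝ} (hvp : Periodic1 v) (hvc : Continuous v) :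
    ∃ M : ℝ, ∀ x, -M ≤ v x := by
  obtain ⟨B, hB⟩ := (isCompact_Icc (a := (0:ℝ)) (b := 1)).exists_bound_of_continuousOn
    hvc.continuousOn
  refine ⟨B, fun x => ?_⟩
  have hint : ∀ (t : ℝ) (n : ℤ), v (t + n) = v t := by
    have := shift_int_aux v 0 (fun t => by rw [hvp t]; ring)
    intro t n; rw [this t n]; ring
  have hx : v x = v (Int.fract x) := by
    have : v (Int.fract x + (⌊x⌋ : ℤ)) = v (Int.fract x) := hint _ _
    rwa [Int.fract_add_floor x] at this
  have hfr : Int.fract x ∈ Set.Icc (0:ℝ) 1 :=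
    ⟨Int.fract_nonneg x, le_of_lt (Int.fract_lt_one x)⟩
  have := hB (Int.fract x) hfr
  rw [hx]
  cases' abs_le.mp this with h1 h2
  linarith

private lemma exists_global_min (S : ℝ → ℝ → ℝ)
    (hS : Continuous fun p : ℝ × ℝ => S p.1 p.2) (hco : Coercive1 S)
    {v : ℝ → ℝ} (hvc : Continuous v) {M : ℝ} (hM : ∀ x, -M ≤ v x) (y : ℝ) :
    ∃ x, ∀ z, v x + S x y ≤ v z + S z y := by
  have hScont : ∀ w : ℝ, Continuous fun z => S z w := fun w =>
    hS.comp (continuous_id.prodMk continuous_const)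
  set f : ℝ → ℝ := fun z => v z + S z y with hf
  have hfc : Continuous f := hvc.add (hScont y)
  obtain ⟨R, hR⟩ := hco (v y + S y y + M)
  have hmem : y ∈ Set.Icc (y - |R| - 1) (y + |R| + 1) := by
    constructor <;> [skip; skip] <;> nlinarith [abs_nonneg R]
  obtain ⟨x₀, hx₀mem, hx₀⟩ := (isCompact_Icc (a := y - |R| - 1) (b := y + |R| + 1)).exists_isMinOn
    ⟨y, hmem⟩ hfc.continuousOn
  refine ⟨x₀, fun z => ?_⟩
  by_cases hz : z ∈ Set.Icc (y - |R| - 1) (y + |R| + 1)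
  · exact hx₀ hz
  · have hzy : R ≤ |z - y| := by
      rw [Set.mem_Icc, not_and_or] at hz
      rcases hz with hz | hz
      · push_neg at hz
        have : |R| + 1 ≤ y - z := by linarith
        calc R ≤ |R| := le_abs_self R
          _ ≤ y - z := by linarith
          _ ≤ |z - y| := by rw [abs_sub_comm]; exact le_abs_self _
      · push_neg at hz
        have : |R| + 1 ≤ z - y := by linarith
        calc R ≤ |R| := le_abs_self R
          _ ≤ z - y := by linarith
          _ ≤ |z - y| := le_abs_self _
    have hSz := hR z y hzy
    have h1 : f y ≤ f z := by
      have := hM z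
      simp only [hf]
      linarith
    exact le_trans (hx₀ hmem) h1

private lemma sigma_of_min (S : ℝ → ℝ → ℝ) (v u σ : ℝ → ℝ)
    (hu : u = Tminus S v)
    (hσuniq : ∀ x y, (∀ z, u z - S x z ≤ u y - S x y) → y = σ x)
    (hbdd : ∀ w, ∃ x, ∀ z, v x + S x w ≤ v z + S z w)
    {x y : ℝ} (hmin : ∀ z, v x + S x y ≤ v z + S z y) : σ x = y := by
  have hbb : ∀ w, BddBelow (Set.range fun t => v t + S t w) := fun w => by
    obtain ⟨m, hm⟩ := hbdd w
    exact ⟨v m + S m w, by rintro _ ⟨t, rfl⟩; exact hm t⟩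
  have hle : ∀ w t, u w ≤ v t + S t w := fun w t => by
    rw [hu]; exact ciInf_le (hbb w) t
  have huy : u y = v x + S x y := by
    refine le_antisymm (hle y x) ?_
    rw [hu]; exact le_ciInf hmin
  refine (hσuniq x y fun z => ?_).symm
  have h1 := hle z x
  linarith

private lemma min_limit (S : ℝ → ℝ → ℝ)
    (hS : Continuous fun p : ℝ × ℝ => S p.1 p.2)
    {v : ℝ → ℝ} (hvc : Continuous v) {x yk : ℕ → ℝ} {a y : ℝ}
    (hx : Filter.Tendsto x Filter.atTop (nhds a))
    (hy : Filter.Tendsto yk Filter.atTop (nhds y))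
    (hmin : ∀ k z, v (x k) + S (x k) (yk k) ≤ v z + S z (yk k)) :
    ∀ z, v a + S a y ≤ v z + S z y := by
  intro z
  have h1 : Filter.Tendsto (fun k => v (x k) + S (x k) (yk k)) Filter.atTop
      (nhds (v a + S a y)) :=
    (((hvc.tendsto a).comp hx)).add ((hS.tendsto (a, y)).comp (hx.prodMk_nhds hy))
  have h2 : Filter.Tendsto (fun k => v z + S z (yk k)) Filter.atTop
      (nhds (v z + S z y)) :=
    tendsto_const_nhds.add ((hS.tendsto (z, y)).comp (tendsto_const_nhds.prodMk_nhds hy))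
  exact le_of_tendsto_of_tendsto' h1 h2 fun k => hmin k z

end Aux

/-- Fibers of the optimal forward map are singletons or non-degenerate compact
intervals, with endpoints minimizing v(·) + S(·,y). -/
theorem fibers_of_forward_map (S : ℝ → ℝ → ℝ)
    (hS : Continuous fun p : ℝ × ℝ => S p.1 p.2)
    (hco : Coercive1 S) (hdp : DiagPeriodic1 S)
    (hlsc : LocallySemiconcave fun p : ℝ × ℝ => S p.1 p.2)
    (hfer : Ferromagnetic1 S) (hnc : NonCrossing S)
    (v u σ : ℝ → ℝ) (hvp : Periodic1 v) (hv : Semiconcave1 v)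
    (hu : u = Tminus S v)
    (hσmax : ∀ x z, u z - S x z ≤ u (σ x) - S x (σ x))
    (hσuniq : ∀ x y, (∀ z, u z - S x z ≤ u y - S x y) → y = σ x)
    (hσcont : Continuous σ) (hσmono : Monotone σ)
    (hσdeg : ∀ x, σ (x + 1) = σ x + 1) :
    ∀ y : ℝ,
      (∃ x : ℝ, σ ⁻¹' {y} = {x} ∧ ∀ z, v x + S x y ≤ v z + S z y) ∨
      (∃ a b : ℝ, a < b ∧ σ ⁻¹' {y} = Set.Icc a b ∧
        (∀ z, v a + S a y ≤ v z + S z y) ∧ (∀ z, v b + S b y ≤ v z + S z y)) := by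
  intro y
  have hvc : Continuous v := semiconcave1_continuous hv
  obtain ⟨M, hM⟩ := periodic1_bound hvp hvc
  have hbdd : ∀ w : ℝ, ∃ x, ∀ z, v x + S x w ≤ v z + S z w :=
    fun w => exists_global_min S hS hco hvc hM w
  have hσint : ∀ (x : ℝ) (n : ℤ), σ (x + n) = σ x + n := by
    have h := shift_int_aux σ 1 (fun t => by rw [hσdeg t])
    intro x n
    have := h x n
    rw [this]; ring
  set F := σ ⁻¹' {y} with hFdef
  have hmemF : ∀ x : ℝ, x ∈ F ↔ σ x = y := by
    intro x; rw [hFdef, Set.mem_preimage, Set.mem_singleton_iff]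
  -- F is nonempty
  obtain ⟨x₀, hx₀⟩ := hbdd y
  have hσx₀ : σ x₀ = y := sigma_of_min S v u σ hu hσuniq hbdd hx₀
  have hx₀F : x₀ ∈ F := (hmemF x₀).2 hσx₀
  -- F is bounded
  have hFbddAbove : BddAbove F := by
    obtain ⟨n, hn⟩ := exists_int_gt (y - σ 0)
    refine ⟨(0:ℝ) + n, fun x hx => ?_⟩
    by_contra hcon
    push_neg at hcon
    have h1 : σ ((0:ℝ) + n) ≤ σ x := hσmono hcon.le
    rw [hσint 0 n, (hmemF x).1 hx] at h1
    linarith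
  have hFbddBelow : BddBelow F := by
    obtain ⟨n, hn⟩ := exists_int_lt (y - σ 0)
    refine ⟨(0:ℝ) + n, fun x hx => ?_⟩
    by_contra hcon
    push_neg at hcon
    have h1 : σ x ≤ σ ((0:ℝ) + n) := hσmono hcon.le
    rw [hσint 0 n, (hmemF x).1 hx] at h1
    linarith
  have hFclosed : IsClosed F := isClosed_singleton.preimage hσcont
  set a := sInf F with ha_def
  set b := sSup F with hb_def
  have haF : a ∈ F := hFclosed.csInf_mem ⟨x₀, hx₀F⟩ hFbddBelow
  have hbF : b ∈ F := hFclosed.csSup_mem ⟨x₀, hx₀F⟩ hFbddAbove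
  have hσa : σ a = y := (hmemF a).1 haF
  have hσb : σ b = y := (hmemF b).1 hbF
  have hab : a ≤ b := le_trans (csInf_le hFbddBelow hx₀F) (le_csSup hFbddAbove hx₀F)
  have hFIcc : F = Set.Icc a b := by
    ext x
    constructor
    · intro hx
      exact ⟨csInf_le hFbddBelow hx, le_csSup hFbddAbove hx⟩
    · rintro ⟨h1, h2⟩
      refine (hmemF x).2 (le_antisymm ?_ ?_)
      · rw [← hσb]; exact hσmono h2
      · rw [← hσa]; exact hσmono h1
  -- the approximating sequence 1/(k+2) → 0
  have h0 : Filter.Tendsto (fun k : ℕ => 1 / ((k : ℝ) + 2)) Filter.atTop (nhds 0) := by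
    apply squeeze_zero (fun k => by positivity) (fun k => ?_)
      tendsto_one_div_add_atTop_nhds_zero_nat
    apply one_div_le_one_div_of_le
    · positivity
    · linarith
  have hpos : ∀ k : ℕ, 0 < 1 / ((k : ℝ) + 2) := fun k => by positivity
  have hlt1 : ∀ k : ℕ, 1 / ((k : ℝ) + 2) < 1 := by
    intro k
    rw [div_lt_one (by positivity)]
    have : (0:ℝ) ≤ (k:ℝ) := Nat.cast_nonneg k
    linarith
  -- left endpoint minimizes
  have ha_min : ∀ z, v a + S a y ≤ v z + S z y := by
    set yk : ℕ → ℝ := fun k => y - 1 / ((k : ℝ) + 2) with hyk_def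
    have hyk : Filter.Tendsto yk Filter.atTop (nhds y) := by
      have hc : Filter.Tendsto (fun _ : ℕ => y) Filter.atTop (nhds y) := tendsto_const_nhds
      rw [hyk_def]; simpa [one_div] using hc.sub h0
    choose xm hxm using fun k => hbdd (yk k)
    have hσxm : ∀ k, σ (xm k) = yk k :=
      fun k => sigma_of_min S v u σ hu hσuniq hbdd (hxm k)
    have hmem : ∀ k, xm k ∈ Set.Icc (a - 1) a := by
      intro k
      constructor
      · by_contra hcon
        push_neg at hcon
        have h1 : σ (xm k) ≤ σ (a - 1) := hσmono hcon.le
        have h2 : σ (a - 1) = y - 1 := by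
          have := hσint a (-1)
          push_cast at this
          rw [show a + (-1 : ℝ) = a - 1 by ring] at this
          rw [this, hσa]; ring
        rw [h2, hσxm k, hyk_def] at h1
        have := hlt1 k
        simp only at h1
        linarith
      · by_contra hcon
        push_neg at hcon
        have h1 : σ a ≤ σ (xm k) := hσmono hcon.le
        rw [hσa, hσxm k, hyk_def] at h1
        have := hpos k
        simp only at h1
        linarith
    obtain ⟨l, hl, φ, hφ, hconv⟩ :=
      (isCompact_Icc (a := a - 1) (b := a)).tendsto_subseq hmem
    have hykφ : Filter.Tendsto (yk ∘ φ) Filter.atTop (nhds y) :=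
      hyk.comp hφ.tendsto_atTop
    have hσl : σ l = y := by
      have h1 : Filter.Tendsto (fun k => σ (xm (φ k))) Filter.atTop (nhds (σ l)) :=
        (hσcont.tendsto l).comp hconv
      have h2 : (fun k => σ (xm (φ k))) = yk ∘ φ := by
        funext k; exact hσxm (φ k)
      rw [h2] at h1
      exact tendsto_nhds_unique h1 hykφ
    have hla : l = a := le_antisymm hl.2 (csInf_le hFbddBelow ((hmemF l).2 hσl))
    have := min_limit S hS hvc (x := xm ∘ φ) (yk := yk ∘ φ) (hla ▸ hconv) hykφ
      (fun k z => hxm (φ k) z)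
    exact this
  -- right endpoint minimizes
  have hb_min : ∀ z, v b + S b y ≤ v z + S z y := by
    set yk : ℕ → ℝ := fun k => y + 1 / ((k : ℝ) + 2) with hyk_def
    have hyk : Filter.Tendsto yk Filter.atTop (nhds y) := by
      have hc : Filter.Tendsto (fun _ : ℕ => y) Filter.atTop (nhds y) := tendsto_const_nhds
      rw [hyk_def]; simpa [one_div] using hc.add h0
    choose xm hxm using fun k => hbdd (yk k)
    have hσxm : ∀ k, σ (xm k) = yk k :=
      fun k => sigma_of_min S v u σ hu hσuniq hbdd (hxm k)
    have hmem : ∀ k, xm k ∈ Set.Icc b (b + 1) := by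
      intro k
      constructor
      · by_contra hcon
        push_neg at hcon
        have h1 : σ (xm k) ≤ σ b := hσmono hcon.le
        rw [hσb, hσxm k, hyk_def] at h1
        have := hpos k
        simp only at h1
        linarith
      · by_contra hcon
        push_neg at hcon
        have h1 : σ (b + 1) ≤ σ (xm k) := hσmono hcon.le
        rw [hσdeg b, hσb, hσxm k, hyk_def] at h1
        have := hlt1 k
        simp only at h1
        linarith
    obtain ⟨l, hl, φ, hφ, hconv⟩ :=
      (isCompact_Icc (a := b) (b := b + 1)).tendsto_subseq hmem
    have hykφ : Filter.Tendsto (yk ∘ φ) Filter.atTop (nhds y) :=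
      hyk.comp hφ.tendsto_atTop
    have hσl : σ l = y := by
      have h1 : Filter.Tendsto (fun k => σ (xm (φ k))) Filter.atTop (nhds (σ l)) :=
        (hσcont.tendsto l).comp hconv
      have h2 : (fun k => σ (xm (φ k))) = yk ∘ φ := by
        funext k; exact hσxm (φ k)
      rw [h2] at h1
      exact tendsto_nhds_unique h1 hykφ
    have hlb : l = b := le_antisymm (le_csSup hFbddAbove ((hmemF l).2 hσl)) hl.1
    exact min_limit S hS hvc (x := xm ∘ φ) (yk := yk ∘ φ) (hlb ▸ hconv) hykφ
      (fun k z => hxm (φ k) z)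
  rcases eq_or_lt_of_le hab with heq | hlt
  · left
    refine ⟨a, ?_, ha_min⟩
    rw [hFIcc, ← heq, Set.Icc_self]
  · right
    exact ⟨a, b, hlt, hFIcc, ha_min, hb_min⟩
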